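/- For every integer m ≥ 1 there exist constants 0 < c_5 < c_6 (depending only on m) such that for all integers n ≥ m and all positive integers n_1, …, n_m with n_1 + ⋯ + n_m = n: c_5 · Π_{i=1}^m (n_i/n)^{−2 n_i} ≤ ( n! / (n_1! ⋯ n_m!) ) · ( Γ(n) / (Γ(n_1) ⋯ Γ(n_m)) ) ≤ c_6 · Π_{i=1}^m (n_i/n)^{−2 n_i}. -/

import Mathlib

open Real Finset Filter Topology

/-- Two-sided Stirling bounds: for `k ≥ 1`,
`√π * √(2k) * (k/e)^k ≤ k! ≤ (e/√2) * √(2k) * (k/e)^k`. -/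
private lemma stirling_bounds (k : ℕ) (hk : 1 ≤ k) :
    Real.sqrt π * (Real.sqrt (2 * k) * ((k : ℝ) / Real.exp 1) ^ k) ≤ k.factorial ∧
    (k.factorial : ℝ) ≤
      (Real.exp 1 / Real.sqrt 2) * (Real.sqrt (2 * k) * ((k : ℝ) / Real.exp 1) ^ k) := by
  obtain ⟨j, rfl⟩ : ∃ j, k = j + 1 := ⟨k - 1, by omega⟩
  have hden : 0 < Real.sqrt (2 * (j + 1 : ℕ)) * (((j + 1 : ℕ) : ℝ) / Real.exp 1) ^ (j + 1) := by
    positivity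
  have hfact : ((j + 1).factorial : ℝ) =
      Stirling.stirlingSeq (j + 1) *
        (Real.sqrt (2 * (j + 1 : ℕ)) * (((j + 1 : ℕ) : ℝ) / Real.exp 1) ^ (j + 1)) := by
    rw [Stirling.stirlingSeq]
    field_simp
  have hsucc : Filter.Tendsto (Stirling.stirlingSeq ∘ Nat.succ) atTop (nhds (Real.sqrt π)) :=
    Stirling.tendsto_stirlingSeq_sqrt_pi.comp (Filter.tendsto_add_atTop_nat 1)
  have hlow : Real.sqrt π ≤ Stirling.stirlingSeq (j + 1) :=
    Stirling.stirlingSeq'_antitone.le_of_tendsto hsucc j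
  have hup : Stirling.stirlingSeq (j + 1) ≤ Real.exp 1 / Real.sqrt 2 := by
    have := Stirling.stirlingSeq'_antitone (Nat.zero_le j)
    simpa [Stirling.stirlingSeq_one] using this
  constructor
  · calc Real.sqrt π * _ ≤ Stirling.stirlingSeq (j + 1) * _ :=
          mul_le_mul_of_nonneg_right hlow hden.le
      _ = _ := hfact.symm
  · calc ((j + 1).factorial : ℝ) = Stirling.stirlingSeq (j + 1) * _ := hfact
      _ ≤ (Real.exp 1 / Real.sqrt 2) * _ := mul_le_mul_of_nonneg_right hup hden.le

set_option maxHeartbeats 1000000 in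
/-- For every m ≥ 1 there are constants 0 < c₅ < c₆ (depending only on m)
such that for all n ≥ m and all positive integers n₁,…,n_m summing to n,
`c₅ · Π (nᵢ/n)^(−2nᵢ) ≤ (n!/(n₁!⋯n_m!)) · (Γ(n)/(Γ(n₁)⋯Γ(n_m))) ≤ c₆ · Π (nᵢ/n)^(−2nᵢ)`. -/
theorem stmt_11 (m : ℕ) (hm : 1 ≤ m) :
    ∃ c₅ c₆ : ℝ, 0 < c₅ ∧ c₅ < c₆ ∧
      ∀ n : ℕ, m ≤ n → ∀ nv : Fin m → ℕ, (∀ i, 0 < nv i) → (∑ i, nv i) = n →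
        c₅ * ∏ i, ((nv i : ℝ) / (n : ℝ)) ^ (-(2 * (nv i : ℤ))) ≤
            ((n.factorial : ℝ) / ∏ i, ((nv i).factorial : ℝ)) *
              (Real.Gamma (n : ℝ) / ∏ i, Real.Gamma ((nv i : ℝ))) ∧
          ((n.factorial : ℝ) / ∏ i, ((nv i).factorial : ℝ)) *
              (Real.Gamma (n : ℝ) / ∏ i, Real.Gamma ((nv i : ℝ))) ≤
            c₆ * ∏ i, ((nv i : ℝ) / (n : ℝ)) ^ (-(2 * (nv i : ℤ))) := by
  have he : (0:ℝ) < Real.exp 1 := Real.exp_pos 1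
  have hpi : (0:ℝ) < π := Real.pi_pos
  refine ⟨2 * π / (Real.exp 1) ^ (2 * m), (Real.exp 1) ^ 2 / (2 * π) ^ m,
    by positivity, ?_, ?_⟩
  · -- c₅ < c₆
    rw [div_lt_div_iff₀ (by positivity) (by positivity)]
    have h1 : 2 * π < (Real.exp 1) ^ 2 := by
      nlinarith [Real.pi_lt_d2, Real.exp_one_gt_d9]
    calc 2 * π * (2 * π) ^ m = (2 * π) ^ (m + 1) := by ring
      _ < ((Real.exp 1) ^ 2) ^ (m + 1) := pow_lt_pow_left₀ h1 (by positivity) (by omega)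
      _ = (Real.exp 1) ^ 2 * (Real.exp 1) ^ (2 * m) := by rw [← pow_mul]; ring
  intro n hn nv hpos hsum
  have hn1 : 1 ≤ n := hm.trans hn
  have hN : (0:ℝ) < (n : ℝ) := by exact_mod_cast Nat.pos_of_ne_zero (by omega)
  have hnvR : ∀ i, (0:ℝ) < (nv i : ℝ) := fun i => by exact_mod_cast hpos i
  obtain ⟨A, hA⟩ : ∃ x : ℝ, x = ∏ i, ((n : ℝ) / (nv i : ℝ)) ^ (nv i) := ⟨_, rfl⟩
  obtain ⟨B, hB⟩ : ∃ x : ℝ, x = ∏ i, ((nv i : ℝ) / Real.exp 1) ^ (nv i) := ⟨_, rfl⟩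
  obtain ⟨p, hp⟩ : ∃ x : ℝ, x = ∏ i, (nv i : ℝ) := ⟨_, rfl⟩
  obtain ⟨Fi, hFi⟩ : ∃ x : ℝ, x = ∏ i, ((nv i).factorial : ℝ) := ⟨_, rfl⟩
  obtain ⟨F, hF⟩ : ∃ x : ℝ, x = (n.factorial : ℝ) := ⟨_, rfl⟩
  obtain ⟨tn, htn⟩ : ∃ x : ℝ, x = Real.sqrt (2 * n) * ((n : ℝ) / Real.exp 1) ^ n := ⟨_, rfl⟩
  obtain ⟨tp, htp⟩ : ∃ x : ℝ,
      x = ∏ i, (Real.sqrt (2 * nv i) * ((nv i : ℝ) / Real.exp 1) ^ (nv i)) := ⟨_, rfl⟩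
  have hA0 : 0 < A := hA ▸ prod_pos fun i _ => by have := hnvR i; positivity
  have hB0 : 0 < B := hB ▸ prod_pos fun i _ => by have := hnvR i; positivity
  have hp0 : 0 < p := hp ▸ prod_pos fun i _ => hnvR i
  have hFi0 : 0 < Fi := hFi ▸ prod_pos fun i _ => by positivity
  have hF0 : 0 < F := hF ▸ by positivity
  have htn0 : 0 < tn := htn ▸ by positivity
  have htp0 : 0 < tp := htp ▸ prod_pos fun i _ => by have := hnvR i; positivity
  -- key identity (n/e)^n = A * B
  have hAB : ((n : ℝ) / Real.exp 1) ^ n = A * B := by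
    have h1 : ∀ i : Fin m, ((n : ℝ) / (nv i : ℝ)) ^ (nv i) *
        ((nv i : ℝ) / Real.exp 1) ^ (nv i) = ((n : ℝ) / Real.exp 1) ^ (nv i) := by
      intro i
      rw [← mul_pow]
      congr 1
      rw [div_mul_div_comm, mul_comm ((n:ℝ)) ((nv i : ℝ))]
      exact mul_div_mul_left _ _ (hnvR i).ne'
    rw [hA, hB, ← prod_mul_distrib, prod_congr rfl fun i _ => h1 i,
      Finset.prod_pow_eq_pow_sum, hsum]
  -- the target product equals A^2
  have hT : (∏ i, ((nv i : ℝ) / (n : ℝ)) ^ (-(2 * (nv i : ℤ)))) = A ^ 2 := by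
    rw [hA, ← prod_pow]
    refine prod_congr rfl fun i _ => ?_
    rw [zpow_neg, ← inv_zpow, inv_div,
      show (2 * (nv i : ℤ)) = ((2 * nv i : ℕ) : ℤ) by push_cast; ring,
      zpow_natCast, pow_mul']
  -- Gamma values
  have hGn : Real.Gamma (n : ℝ) = F / (n : ℝ) := by
    have h2 : n - 1 + 1 = n := Nat.succ_pred_eq_of_pos hn1
    have h1 : (n : ℝ) = ((n - 1 : ℕ) : ℝ) + 1 := by
      rw [show ((n - 1 : ℕ) : ℝ) + 1 = (((n - 1) + 1 : ℕ) : ℝ) by push_cast; ring, h2]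
    rw [h1, Real.Gamma_nat_eq_factorial, eq_div_iff (by rw [← h1]; exact hN.ne'), ← h1, hF]
    norm_cast
    rw [mul_comm]
    exact Nat.mul_factorial_pred (by omega)
  have hGi : ∀ i, Real.Gamma ((nv i : ℝ)) = ((nv i).factorial : ℝ) / (nv i : ℝ) := by
    intro i
    have hi := hpos i
    have h2 : nv i - 1 + 1 = nv i := Nat.succ_pred_eq_of_pos hi
    have h1 : ((nv i : ℕ) : ℝ) = ((nv i - 1 : ℕ) : ℝ) + 1 := by
      rw [show ((nv i - 1 : ℕ) : ℝ) + 1 = (((nv i - 1) + 1 : ℕ) : ℝ) by push_cast; ring, h2]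
    rw [h1, Real.Gamma_nat_eq_factorial, eq_div_iff (by rw [← h1]; exact (hnvR i).ne'), ← h1]
    norm_cast
    rw [mul_comm]
    exact Nat.mul_factorial_pred (by omega)
  have hGprod : (∏ i, Real.Gamma ((nv i : ℝ))) = Fi / p := by
    rw [hFi, hp, ← prod_div_distrib]
    exact prod_congr rfl fun i _ => hGi i
  -- rewrite middle expression
  have hmid : ((n.factorial : ℝ) / ∏ i, ((nv i).factorial : ℝ)) *
      (Real.Gamma (n : ℝ) / ∏ i, Real.Gamma ((nv i : ℝ)))
      = F ^ 2 * p / (Fi ^ 2 * (n : ℝ)) := by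
    rw [hGn, hGprod, ← hF, ← hFi]
    field_simp
  have hconst : ∀ (f : Fin m → ℝ) (c : ℝ), ∏ i, (c * f i) = c ^ m * ∏ i, f i := by
    intro f c
    rw [prod_mul_distrib, prod_const, card_univ, Fintype.card_fin]
  -- Stirling bounds
  have hFl : Real.sqrt π * tn ≤ F := by
    rw [hF, htn]; exact (stirling_bounds n hn1).1
  have hFu : F ≤ (Real.exp 1 / Real.sqrt 2) * tn := by
    rw [hF, htn]; exact (stirling_bounds n hn1).2
  have hFil : (Real.sqrt π) ^ m * tp ≤ Fi := by
    rw [hFi, htp, ← hconst]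
    exact prod_le_prod (fun i _ => by have := hnvR i; positivity)
      (fun i _ => (stirling_bounds (nv i) (hpos i)).1)
  have hFiu : Fi ≤ (Real.exp 1 / Real.sqrt 2) ^ m * tp := by
    rw [hFi, htp, ← hconst]
    exact prod_le_prod (fun i _ => by positivity)
      (fun i _ => (stirling_bounds (nv i) (hpos i)).2)
  -- square identities
  have htn2 : tn ^ 2 = 2 * (n : ℝ) * (A * B) ^ 2 := by
    rw [htn, mul_pow, Real.sq_sqrt (by positivity), hAB]
  have htp2 : tp ^ 2 = 2 ^ m * p * B ^ 2 := by
    have h1 : (∏ i, (Real.sqrt (2 * nv i) * ((nv i : ℝ) / Real.exp 1) ^ (nv i))) ^ 2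
        = ∏ i, ((2:ℝ) * (nv i : ℝ) * (((nv i : ℝ) / Real.exp 1) ^ (nv i)) ^ 2) := by
      rw [← prod_pow]
      exact prod_congr rfl fun i _ => by
        rw [mul_pow, Real.sq_sqrt (by have := hnvR i; positivity)]
    rw [htp, h1, hB, hp, prod_mul_distrib, prod_mul_distrib, prod_const, card_univ,
      Fintype.card_fin, prod_pow]
  have hsq2 : ((Real.exp 1 / Real.sqrt 2) ^ m) ^ 2 = (Real.exp 1) ^ (2 * m) / 2 ^ m := by
    rw [pow_right_comm, div_pow, Real.sq_sqrt (by norm_num : (0:ℝ) ≤ 2), div_pow, ← pow_mul]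
  have hsqpi : (Real.sqrt π) ^ 2 = π := Real.sq_sqrt hpi.le
  have hsqpim : ((Real.sqrt π) ^ m) ^ 2 = π ^ m := by
    rw [← pow_mul, mul_comm m 2, pow_mul, hsqpi]
  rw [hT, hmid]
  constructor
  · -- lower bound
    have hle : (Real.sqrt π * tn) ^ 2 * p / (((Real.exp 1 / Real.sqrt 2) ^ m * tp) ^ 2 * (n : ℝ))
        ≤ F ^ 2 * p / (Fi ^ 2 * (n : ℝ)) := by
      apply div_le_div₀ (mul_nonneg (sq_nonneg F) hp0.le)
      · exact mul_le_mul_of_nonneg_right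
          (pow_le_pow_left₀ (mul_nonneg (Real.sqrt_nonneg _) htn0.le) hFl 2) hp0.le
      · exact mul_pos (pow_pos hFi0 2) hN
      · exact mul_le_mul_of_nonneg_right (pow_le_pow_left₀ hFi0.le hFiu 2) hN.le
    refine le_trans (le_of_eq ?_) hle
    rw [mul_pow, mul_pow, hsqpi, hsq2, htn2, htp2]
    field_simp
  · -- upper bound
    have hle : F ^ 2 * p / (Fi ^ 2 * (n : ℝ))
        ≤ ((Real.exp 1 / Real.sqrt 2) * tn) ^ 2 * p /
          (((Real.sqrt π) ^ m * tp) ^ 2 * (n : ℝ)) := by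
      apply div_le_div₀ (mul_nonneg (sq_nonneg _) hp0.le)
      · exact mul_le_mul_of_nonneg_right (pow_le_pow_left₀ hF0.le hFu 2) hp0.le
      · exact mul_pos (pow_pos (mul_pos (pow_pos (Real.sqrt_pos.mpr hpi) m) htp0) 2) hN
      · exact mul_le_mul_of_nonneg_right
          (pow_le_pow_left₀ (mul_nonneg (pow_nonneg (Real.sqrt_nonneg _) m) htp0.le) hFil 2) hN.le
    refine hle.trans (le_of_eq ?_)
    rw [mul_pow, mul_pow, hsqpim, htn2, htp2, div_pow,
      Real.sq_sqrt (by norm_num : (0:ℝ) ≤ 2),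
      show ((2:ℝ) * π) ^ m = 2 ^ m * π ^ m from mul_pow 2 π m]
    field_simp
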